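/- Let Φ : M_r → M_n be a linear map and let 1 ≤ k ≤ n. Then sup{ |⟨v, (id_k ⊗ Φ)(X) v⟩| : X ∈ M_k ⊗ M_r Hermitian with ‖X‖ ≤ 1, v a unit vector in ℂ^k ⊗ ℂ^n } equals sup over all m ≥ 1 of sup{ |⟨v, (id_m ⊗ Φ)(X) v⟩| : X ∈ M_m ⊗ M_r Hermitian with ‖X‖ ≤ 1, v a unit vector in ℂ^m ⊗ ℂ^n with SR(v) ≤ k }. (This is Equation (10) of the paper, the stabilization result for the completely bounded order norm on the k-super minimal operator system.) -/

import Mathlib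

open scoped ComplexOrder Kronecker
open Matrix

noncomputable section

/-- The standard inner product `⟨v, w⟩ = ∑ conj(vᵢ) wᵢ` on `I → ℂ`. -/
def inprod {I : Type*} [Fintype I] (v w : I → ℂ) : ℂ :=
  ∑ i, (starRingEnd ℂ) (v i) * w i

/-- `v` is a unit vector. -/
def UnitVec {I : Type*} [Fintype I] (v : I → ℂ) : Prop :=
  inprod v v = 1

/-- The Schmidt rank of a vector in `ℂ^I ⊗ ℂ^J`, i.e. the rank of the associated
`I × J` coefficient matrix. -/
noncomputable def SchmidtRank {I J : Type*} [Fintype I] [Fintype J] (v : I × J → ℂ) : ℕ :=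
  (Matrix.of fun i j => v (i, j)).rank

/-- The operator norm (largest singular value) of a matrix, as
`sup { |⟨v, A w⟩| : v, w unit vectors }`. -/
noncomputable def opNorm {I J : Type*} [Fintype I] [Fintype J] (A : Matrix I J ℂ) : ℝ :=
  sSup { t : ℝ | ∃ v w, UnitVec v ∧ UnitVec w ∧ t = ‖inprod v (A.mulVec w)‖ }

/-- The `S(k)`-norm of `X ∈ M_I ⊗ M_J`. -/
noncomputable def SNorm {I J : Type*} [Fintype I] [Fintype J] (k : ℕ)
    (X : Matrix (I × J) (I × J) ℂ) : ℝ :=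
  sSup { t : ℝ | ∃ v w : I × J → ℂ, UnitVec v ∧ UnitVec w ∧
    SchmidtRank v ≤ k ∧ SchmidtRank w ≤ k ∧
    t = ‖inprod v (X.mulVec w)‖ }

/-- `X` is a `k`-block positive (Hermitian) operator: `⟨v, X v⟩ ≥ 0` for every
vector of Schmidt rank at most `k`. -/
def kBlockPos {I J : Type*} [Fintype I] [Fintype J] (k : ℕ)
    (X : Matrix (I × J) (I × J) ℂ) : Prop :=
  X.IsHermitian ∧ ∀ v : I × J → ℂ, SchmidtRank v ≤ k → 0 ≤ inprod v (X.mulVec v)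

/-- `ρ` has Schmidt number at most `k` (in particular it is positive semidefinite):
it is a finite nonnegative combination of rank-one projections onto vectors of
Schmidt rank at most `k`. -/
def SchmidtNumberLE {I J : Type*} [Fintype I] [Fintype J] (k : ℕ)
    (ρ : Matrix (I × J) (I × J) ℂ) : Prop :=
  ∃ (N : ℕ) (c : Fin N → ℝ) (v : Fin N → (I × J → ℂ)),
    (∀ i, 0 ≤ c i) ∧ (∀ i, SchmidtRank (v i) ≤ k) ∧
    ρ = ∑ i, (c i : ℂ) • Matrix.vecMulVec (v i) (star (v i))

/-- `id_I ⊗ Φ` : the map applying `Φ` to the second tensor factor. -/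
noncomputable def tensorId {I : Type*} [Fintype I] {a b : ℕ}
    (Φ : Matrix (Fin a) (Fin a) ℂ →ₗ[ℂ] Matrix (Fin b) (Fin b) ℂ)
    (X : Matrix (I × Fin a) (I × Fin a) ℂ) : Matrix (I × Fin b) (I × Fin b) ℂ :=
  Matrix.of fun p q => Φ (Matrix.of fun s t => X (p.1, s) (q.1, t)) p.2 q.2

/-- The trace norm `‖X‖_tr = Tr √(X^* X)`. -/
noncomputable def trNorm {I : Type*} [Fintype I] [DecidableEq I] (X : Matrix I I ℂ) : ℝ :=
  ((Matrix.posSemidef_conjTranspose_mul_self X).1.eigenvectorUnitary.1 *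
    Matrix.diagonal (((↑) : ℝ → ℂ) ∘ (Real.sqrt ·) ∘ (Matrix.posSemidef_conjTranspose_mul_self X).1.eigenvalues) *
    (star (Matrix.posSemidef_conjTranspose_mul_self X).1.eigenvectorUnitary :
      Matrix I I ℂ)).trace.re

end

noncomputable section Auxiliary

variable {I J K : Type*} [Fintype I] [Fintype J] [Fintype K]

lemma inprod_smul_left (c : ℂ) (x y : I → ℂ) :
    inprod (c • x) y = (starRingEnd ℂ) c * inprod x y := by
  simp [inprod, Finset.mul_sum]; ring_nf

lemma inprod_smul_right (c : ℂ) (x y : I → ℂ) :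
    inprod x (c • y) = c * inprod x y := by
  simp [inprod, Finset.mul_sum]
  exact Finset.sum_congr rfl fun i _ => by ring

lemma inprod_self (x : I → ℂ) :
    inprod x x = ((∑ i, Complex.normSq (x i) : ℝ) : ℂ) := by
  simp only [inprod]
  push_cast
  exact Finset.sum_congr rfl fun i _ => by
    rw [Complex.normSq_eq_conj_mul_self]

lemma inprod_conjT (B : Matrix I J ℂ) (x : I → ℂ) (y : J → ℂ) :
    inprod x (B.mulVec y) = inprod (Bᴴ.mulVec x) y := by
  have L : inprod x (B.mulVec y) = ∑ i, ∑ j, (starRingEnd ℂ) (x i) * B i j * y j := by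
    simp [inprod, Matrix.mulVec, dotProduct, Finset.mul_sum, mul_assoc]
  have R : inprod (Bᴴ.mulVec x) y = ∑ j, ∑ i, (starRingEnd ℂ) (x i) * B i j * y j := by
    simp only [inprod, Matrix.mulVec, dotProduct, Matrix.conjTranspose_apply, map_sum,
      _root_.map_mul, starRingEnd_apply, star_star, Finset.sum_mul]
    exact Finset.sum_congr rfl fun j _ => Finset.sum_congr rfl fun i _ => by ring
  rw [L, R, Finset.sum_comm]

lemma unitVec_normSq_sum {v : I → ℂ} (hv : UnitVec v) :
    ∑ i, Complex.normSq (v i) = 1 := by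
  have := hv
  rw [UnitVec, inprod_self] at this
  exact_mod_cast this

lemma unitVec_abs_le {v : I → ℂ} (hv : UnitVec v) (i : I) : ‖v i‖ ≤ 1 := by
  have h1 := unitVec_normSq_sum hv
  have h2 : Complex.normSq (v i) ≤ 1 := by
    calc Complex.normSq (v i) ≤ ∑ i, Complex.normSq (v i) :=
      Finset.single_le_sum (fun i _ => Complex.normSq_nonneg _) (Finset.mem_univ i)
    _ = 1 := h1
  nlinarith [Complex.sq_norm (v i), norm_nonneg (v i)]

lemma bddAbove_opNorm_set (A : Matrix I J ℂ) :
    BddAbove { t : ℝ | ∃ v w, UnitVec v ∧ UnitVec w ∧ t = ‖inprod v (A.mulVec w)‖ } := by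
  refine ⟨∑ i, ∑ j, ‖A i j‖, ?_⟩
  rintro t ⟨v, w, hv, hw, rfl⟩
  calc ‖inprod v (A.mulVec w)‖
      = ‖∑ i, ∑ j, (starRingEnd ℂ) (v i) * A i j * w j‖ := by
        simp [inprod, Matrix.mulVec, dotProduct, Finset.mul_sum, mul_assoc]
    _ ≤ ∑ i, ‖∑ j, (starRingEnd ℂ) (v i) * A i j * w j‖ :=
        norm_sum_le _ _
    _ ≤ ∑ i, ∑ j, ‖(starRingEnd ℂ) (v i) * A i j * w j‖ :=
        Finset.sum_le_sum fun i _ => norm_sum_le _ _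
    _ ≤ ∑ i, ∑ j, ‖A i j‖ := by
        refine Finset.sum_le_sum fun i _ => Finset.sum_le_sum fun j _ => ?_
        rw [norm_mul, norm_mul, Complex.norm_conj]
        have h1 := unitVec_abs_le hv i
        have h2 := unitVec_abs_le hw j
        have h3 := norm_nonneg (A i j)
        have h4 := norm_nonneg (v i)
        calc ‖v i‖ * ‖A i j‖ * ‖w j‖
            ≤ 1 * ‖A i j‖ * 1 := by gcongr
          _ = ‖A i j‖ := by ring

lemma abs_inprod_le_opNorm (A : Matrix I J ℂ) {v : I → ℂ} {w : J → ℂ}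
    (hv : UnitVec v) (hw : UnitVec w) :
    ‖inprod v (A.mulVec w)‖ ≤ opNorm A :=
  le_csSup (bddAbove_opNorm_set A) ⟨v, w, hv, hw, rfl⟩

lemma sum_fin_dite {β : Type*} [AddCommMonoid β] {k d : ℕ} (hd : d ≤ k) (f : Fin d → β) :
    ∑ j : Fin k, (if h : (j : ℕ) < d then f ⟨j, h⟩ else 0) = ∑ j : Fin d, f j := by
  set g : ℕ → β := fun j => if h : j < d then f ⟨j, h⟩ else 0 with hg
  have h1 : ∑ j : Fin k, (if h : (j : ℕ) < d then f ⟨j, h⟩ else 0) = ∑ j ∈ Finset.range k, g j := by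
    rw [← Fin.sum_univ_eq_sum_range]
  have h2 : ∑ j : Fin d, f j = ∑ j ∈ Finset.range d, g j := by
    rw [← Fin.sum_univ_eq_sum_range]
    exact Finset.sum_congr rfl fun j _ => by simp [hg, j.2]
  rw [h1, h2]
  symm
  apply Finset.sum_subset (Finset.range_subset_range.2 hd)
  intro x _ hx
  simp only [Finset.mem_range, not_lt] at hx
  simp [hg, Nat.not_lt.2 hx]

def lift {I K J : Type*} [DecidableEq J] (A : Matrix I K ℂ) : Matrix (I × J) (K × J) ℂ :=
  Matrix.of fun p q => if p.2 = q.2 then A p.1 q.1 else 0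

lemma lift_mulVec {I K J : Type*} [Fintype K] [Fintype J] [DecidableEq J]
    (A : Matrix I K ℂ) (x : K × J → ℂ) (p : I × J) :
    (lift A).mulVec x p = ∑ j, A p.1 j * x (j, p.2) := by
  rw [Matrix.mulVec, dotProduct, Fintype.sum_prod_type]
  refine Finset.sum_congr rfl fun j _ => ?_
  rw [Finset.sum_eq_single p.2]
  · simp [lift]
  · intro t _ ht
    simp [lift, Ne.symm ht]
  · simp

lemma lift_conjTranspose {I K J : Type*} [DecidableEq J] (A : Matrix I K ℂ) :
    (lift A (J := J))ᴴ = lift Aᴴ := by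
  ext p q
  simp only [Matrix.conjTranspose_apply, lift, Matrix.of_apply]
  by_cases h : q.2 = p.2
  · simp [h, eq_comm]
  · simp [h, fun hh => h (Eq.symm hh), Ne.symm h]

lemma comp_apply {m k : ℕ} {J : Type*} [Fintype J] [DecidableEq J]
    (U : Matrix (Fin m) (Fin k) ℂ) (X : Matrix (Fin m × J) (Fin m × J) ℂ) (p q : Fin k × J) :
    (lift Uᴴ (J := J) * X * lift U (J := J) : Matrix (Fin k × J) (Fin k × J) ℂ) p q
      = ∑ i, ∑ i', (starRingEnd ℂ) (U i p.1) * X (i, p.2) (i', q.2) * U i' q.1 := by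
  have h1 : ∀ i' : Fin m, (lift Uᴴ (J := J) * X : Matrix (Fin k × J) (Fin m × J) ℂ) p (i', q.2)
      = ∑ i, (starRingEnd ℂ) (U i p.1) * X (i, p.2) (i', q.2) := by
    intro i'
    rw [Matrix.mul_apply, Fintype.sum_prod_type, Finset.sum_comm, Finset.sum_eq_single p.2]
    · refine Finset.sum_congr rfl fun i _ => ?_
      have : (lift Uᴴ : Matrix (Fin k × J) (Fin m × J) ℂ) p (i, p.2) = (starRingEnd ℂ) (U i p.1) := by
        simp only [lift, Matrix.of_apply, Matrix.conjTranspose_apply, if_pos rfl]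
        rfl
      rw [this]
    · intro t _ ht
      apply Finset.sum_eq_zero
      intro i _
      have : (lift Uᴴ : Matrix (Fin k × J) (Fin m × J) ℂ) p (i, t) = 0 := by
        simp [lift, ht.symm]
      rw [this, zero_mul]
    · simp
  rw [Matrix.mul_apply, Fintype.sum_prod_type, Finset.sum_comm, Finset.sum_eq_single q.2]
  · have h2 : ∀ i' : Fin m,
        (lift Uᴴ (J := J) * X : Matrix (Fin k × J) (Fin m × J) ℂ) p (i', q.2)
            * (lift U : Matrix (Fin m × J) (Fin k × J) ℂ) (i', q.2) q
          = ∑ i, (starRingEnd ℂ) (U i p.1) * X (i, p.2) (i', q.2) * U i' q.1 := by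
      intro i'
      have hU : (lift U : Matrix (Fin m × J) (Fin k × J) ℂ) (i', q.2) q = U i' q.1 := by
        simp [lift]
      rw [hU, h1 i', Finset.sum_mul]
    rw [Finset.sum_congr rfl fun i' _ => h2 i', Finset.sum_comm]
  · intro t _ ht
    apply Finset.sum_eq_zero
    intro i' _
    have : (lift U : Matrix (Fin m × J) (Fin k × J) ℂ) (i', t) q = 0 := by simp [lift, ht]
    rw [this, mul_zero]
  · simp

lemma tensorId_comp {m k r n : ℕ} (Φ : Matrix (Fin r) (Fin r) ℂ →ₗ[ℂ] Matrix (Fin n) (Fin n) ℂ)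
    (U : Matrix (Fin m) (Fin k) ℂ) (X : Matrix (Fin m × Fin r) (Fin m × Fin r) ℂ) :
    tensorId Φ (lift Uᴴ (J := Fin r) * X * lift U (J := Fin r)) = lift Uᴴ (J := Fin n) * tensorId Φ X * lift U (J := Fin n) := by
  ext p q
  rw [show (lift Uᴴ (J := Fin n) * tensorId Φ X * lift U (J := Fin n) : Matrix (Fin k × Fin n) (Fin k × Fin n) ℂ) p q
    = ∑ i, ∑ i', (starRingEnd ℂ) (U i p.1) * tensorId Φ X (i, p.2) (i', q.2) * U i' q.1 from
    comp_apply U (tensorId Φ X) p q]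
  have hmat : (Matrix.of fun s t =>
        (lift Uᴴ (J := Fin r) * X * lift U (J := Fin r) : Matrix (Fin k × Fin r) (Fin k × Fin r) ℂ) (p.1, s) (q.1, t))
      = ∑ i, ∑ i', ((starRingEnd ℂ) (U i p.1) * U i' q.1) •
          (Matrix.of fun s t => X (i, s) (i', t)) := by
    ext s t
    rw [Matrix.of_apply, comp_apply U X (p.1, s) (q.1, t)]
    rw [Matrix.sum_apply]
    refine Finset.sum_congr rfl fun i _ => ?_
    rw [Matrix.sum_apply]
    refine Finset.sum_congr rfl fun i' _ => ?_
    rw [Matrix.smul_apply, Matrix.of_apply, smul_eq_mul]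
    ring
  show Φ (Matrix.of fun s t =>
      (lift Uᴴ (J := Fin r) * X * lift U (J := Fin r) : Matrix (Fin k × Fin r) (Fin k × Fin r) ℂ) (p.1, s) (q.1, t)) p.2 q.2
    = _
  rw [hmat, map_sum]
  rw [Matrix.sum_apply]
  refine Finset.sum_congr rfl fun i _ => ?_
  rw [map_sum, Matrix.sum_apply]
  refine Finset.sum_congr rfl fun i' _ => ?_
  rw [LinearMap.map_smul, Matrix.smul_apply, smul_eq_mul]
  show ((starRingEnd ℂ) (U i p.1) * U i' q.1) * Φ (Matrix.of fun s t => X (i, s) (i', t)) p.2 q.2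
    = (starRingEnd ℂ) (U i p.1) * tensorId Φ X (i, p.2) (i', q.2) * U i' q.1
  rw [show tensorId Φ X (i, p.2) (i', q.2)
    = Φ (Matrix.of fun s t => X (i, s) (i', t)) p.2 q.2 from rfl]
  ring

set_option maxHeartbeats 1000000 in
lemma compress {m k r n : ℕ}
    (Φ : Matrix (Fin r) (Fin r) ℂ →ₗ[ℂ] Matrix (Fin n) (Fin n) ℂ)
    (X : Matrix (Fin m × Fin r) (Fin m × Fin r) ℂ) (hX : X.IsHermitian) (hXn : opNorm X ≤ 1)
    (v : Fin m × Fin n → ℂ) (hv : UnitVec v) (hSR : SchmidtRank v ≤ k) :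
    ∃ X' : Matrix (Fin k × Fin r) (Fin k × Fin r) ℂ, X'.IsHermitian ∧ opNorm X' ≤ 1 ∧
      ∃ v' : Fin k × Fin n → ℂ, UnitVec v' ∧
        inprod v' ((tensorId Φ X').mulVec v') = inprod v ((tensorId Φ X).mulVec v) := by
  classical
  set M : Matrix (Fin m) (Fin n) ℂ := Matrix.of fun i j => v (i, j) with hM
  let e' : EuclideanSpace ℂ (Fin m) ≃ₗ[ℂ] (Fin m → ℂ) := WithLp.linearEquiv 2 ℂ (Fin m → ℂ)
  let S : Submodule ℂ (EuclideanSpace ℂ (Fin m)) :=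
    (LinearMap.range M.mulVecLin).map (e'.symm : (Fin m → ℂ) →ₗ[ℂ] EuclideanSpace ℂ (Fin m))
  have hdk : Module.finrank ℂ S ≤ k := by
    have h1 : Module.finrank ℂ S = Module.finrank ℂ (LinearMap.range M.mulVecLin) :=
      LinearEquiv.finrank_map_eq e'.symm _
    rw [h1]
    exact hSR
  set d := Module.finrank ℂ S with hd
  let b := stdOrthonormalBasis ℂ S
  let F : S →ₗ[ℂ] (Fin m → ℂ) := e'.toLinearMap.comp S.subtype
  let u : Fin k → (Fin m → ℂ) := fun j =>
    if h : (j : ℕ) < d then F (b ⟨j, h⟩) else 0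
  have hUU : ∀ j j' : Fin k,
      (∑ i, (starRingEnd ℂ) (u j i) * (u j' i)) = if j = j' ∧ (j : ℕ) < d then 1 else 0 := by
    intro j j'
    by_cases hj : (j : ℕ) < d
    · by_cases hj' : (j' : ℕ) < d
      · have horth := orthonormal_iff_ite.mp b.orthonormal ⟨j, hj⟩ ⟨j', hj'⟩
        rw [Submodule.coe_inner, PiLp.inner_apply] at horth
        simp only [RCLike.inner_apply] at horth
        have heq : (∑ i, (starRingEnd ℂ) (u j i) * (u j' i))
            = if (⟨j, hj⟩ : Fin d) = ⟨j', hj'⟩ then 1 else 0 := by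
          rw [← horth]
          refine Finset.sum_congr rfl fun i _ => ?_
          simp only [u, dif_pos hj, dif_pos hj']
          exact mul_comm _ _
        rw [heq]
        by_cases hjj : j = j'
        · subst hjj; simp [hj]
        · rw [if_neg (show ¬((⟨(j : ℕ), hj⟩ : Fin d) = ⟨(j' : ℕ), hj'⟩) from
              fun hh => hjj (Fin.ext (by simpa [Fin.ext_iff] using hh))),
            if_neg (show ¬(j = j' ∧ (j : ℕ) < d) from fun hh => hjj hh.1)]
      · have hu0 : u j' = 0 := dif_neg hj'
        rw [if_neg (show ¬(j = j' ∧ (j : ℕ) < d) from by rintro ⟨rfl, _⟩; exact hj' hj)]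
        simp [hu0]
    · have hu0 : u j = 0 := dif_neg hj
      rw [if_neg (show ¬(j = j' ∧ (j : ℕ) < d) from fun hh => hj hh.2)]
      simp [hu0]
  have hrec : ∀ y : Fin m → ℂ, y ∈ LinearMap.range M.mulVecLin →
      ∀ i, (∑ j : Fin k, u j i * (∑ i', (starRingEnd ℂ) (u j i') * y i')) = y i := by
    intro y hy i
    have hmem : e'.symm y ∈ S := Submodule.mem_map_of_mem hy
    set x : S := ⟨e'.symm y, hmem⟩ with hxdef
    have hx := b.sum_repr' x
    have h := congrArg F hx
    rw [map_sum] at h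
    simp only [_root_.map_smul] at h
    have h4 := congrFun h i
    rw [Finset.sum_apply] at h4
    simp only [Pi.smul_apply, smul_eq_mul, Submodule.coe_inner, PiLp.inner_apply,
      RCLike.inner_apply] at h4
    have hstep : (∑ j : Fin k, u j i * (∑ i', (starRingEnd ℂ) (u j i') * y i'))
        = ∑ j : Fin k, (if h : (j : ℕ) < d then
            (∑ i', (starRingEnd ℂ) (((b ⟨j, h⟩ : S) : EuclideanSpace ℂ (Fin m)) i') * y i')
              * (F (b ⟨j, h⟩)) i else 0) := by
      refine Finset.sum_congr rfl fun j _ => ?_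
      by_cases h : (j : ℕ) < d
      · rw [dif_pos h]
        have hu : u j = F (b ⟨j, h⟩) := by simp only [u, dif_pos h]
        rw [hu, mul_comm]
        exact rfl
      · have hu : u j = 0 := by simp only [u, dif_neg h]
        rw [dif_neg h, hu]
        simp
    rw [hstep, sum_fin_dite hdk
      (fun jd => (∑ i', (starRingEnd ℂ) (((b jd : S) : EuclideanSpace ℂ (Fin m)) i') * y i')
        * (F (b jd)) i)]
    have hfin : (∑ jd : Fin d,
        (∑ i', (starRingEnd ℂ) (((b jd : S) : EuclideanSpace ℂ (Fin m)) i') * y i')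
          * (F (b jd)) i) = ∑ jd : Fin d,
        (∑ i', (starRingEnd ℂ) (((b jd : S) : EuclideanSpace ℂ (Fin m)) i')
          * ((x : EuclideanSpace ℂ (Fin m)) i')) * (F (b jd)) i :=
      Finset.sum_congr rfl fun jd _ => rfl
    rw [hfin]
    refine Eq.trans (Finset.sum_congr rfl fun jd _ => ?_) (h4.trans ?_)
    · congr 1; exact Finset.sum_congr rfl fun i' _ => mul_comm _ _
    · rfl
  -- the isometry-like matrix
  let U : Matrix (Fin m) (Fin k) ℂ := Matrix.of fun i j => u j i
  have hadjr : ∀ (xx : Fin k × Fin r → ℂ) (yy : Fin m × Fin r → ℂ),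
      inprod xx ((lift Uᴴ).mulVec yy) = inprod ((lift U).mulVec xx) yy := by
    intro xx yy
    rw [inprod_conjT]
    congr 1
    rw [lift_conjTranspose, conjTranspose_conjTranspose]
  have hadjn : ∀ (xx : Fin k × Fin n → ℂ) (yy : Fin m × Fin n → ℂ),
      inprod xx ((lift Uᴴ).mulVec yy) = inprod ((lift U).mulVec xx) yy := by
    intro xx yy
    rw [inprod_conjT]
    congr 1
    rw [lift_conjTranspose, conjTranspose_conjTranspose]
  have hmask : ∀ (a : Fin k × Fin r → ℂ) (p : Fin k × Fin r),
      ((lift Uᴴ).mulVec ((lift U).mulVec a)) p = if (p.1 : ℕ) < d then a p else 0 := by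
    intro a p
    rw [lift_mulVec]
    calc ∑ i, Uᴴ p.1 i * ((lift U).mulVec a) (i, p.2)
        = ∑ i, ∑ j, (starRingEnd ℂ) (u p.1 i) * (u j i * a (j, p.2)) := by
          refine Finset.sum_congr rfl fun i _ => ?_
          rw [lift_mulVec, Finset.mul_sum]
          exact rfl
      _ = ∑ j, (∑ i, (starRingEnd ℂ) (u p.1 i) * u j i) * a (j, p.2) := by
          rw [Finset.sum_comm]
          refine Finset.sum_congr rfl fun j _ => ?_
          rw [Finset.sum_mul]
          exact Finset.sum_congr rfl fun i _ => by ring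
      _ = ∑ j, (if p.1 = j ∧ (p.1 : ℕ) < d then 1 else 0) * a (j, p.2) := by
          refine Finset.sum_congr rfl fun j _ => ?_
          rw [hUU p.1 j]
      _ = if (p.1 : ℕ) < d then a p else 0 := by
          by_cases hc : (p.1 : ℕ) < d
          · rw [if_pos hc, Finset.sum_eq_single p.1]
            · simp [hc]
            · intro j _ hj
              rw [if_neg (fun hh => hj (hh.1.symm)), zero_mul]
            · simp
          · rw [if_neg hc]
            apply Finset.sum_eq_zero
            intro j _
            rw [if_neg (fun hh => hc hh.2), zero_mul]
  have hproj : (lift U (J := Fin n)).mulVec ((lift Uᴴ).mulVec v) = v := by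
    funext p
    have hcol : (fun i' => v (i', p.2)) ∈ LinearMap.range M.mulVecLin := by
      refine ⟨Pi.single p.2 1, ?_⟩
      funext i'
      rw [Matrix.mulVecLin_apply, Matrix.mulVec_single]
      simp [hM]
    calc ((lift U).mulVec ((lift Uᴴ).mulVec v)) p
        = ∑ j, u j p.1 * ((lift Uᴴ).mulVec v) (j, p.2) := by rw [lift_mulVec]; exact rfl
      _ = ∑ j, u j p.1 * (∑ i', (starRingEnd ℂ) (u j i') * v (i', p.2)) := by
          refine Finset.sum_congr rfl fun j _ => ?_
          rw [lift_mulVec]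
          exact rfl
      _ = v (p.1, p.2) := hrec (fun i' => v (i', p.2)) hcol p.1
      _ = v p := by simp
  refine ⟨lift Uᴴ (J := Fin r) * X * lift U (J := Fin r), ?_, ?_, (lift Uᴴ).mulVec v, ?_, ?_⟩
  · have h := Matrix.isHermitian_conjTranspose_mul_mul (lift U (J := Fin r)) hX
    rwa [lift_conjTranspose] at h
  · -- opNorm bound
    apply Real.sSup_le _ zero_le_one
    rintro t ⟨aa, cc, ha, hc, rfl⟩
    have hbound : ∀ zz : Fin k × Fin r → ℂ, UnitVec zz →
        (0 ≤ ∑ p, Complex.normSq (((lift U (J := Fin r)).mulVec zz) p)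
          ∧ ∑ p, Complex.normSq (((lift U (J := Fin r)).mulVec zz) p) ≤ 1) := by
      intro zz hz
      constructor
      · exact Finset.sum_nonneg fun p _ => Complex.normSq_nonneg _
      · have h1 : inprod ((lift U (J := Fin r)).mulVec zz) ((lift U).mulVec zz)
            = inprod ((lift Uᴴ).mulVec ((lift U).mulVec zz)) zz := by
          rw [inprod_conjT, lift_conjTranspose]
        have h2 : inprod ((lift Uᴴ).mulVec ((lift U).mulVec zz)) zz
            = ((∑ p, if (p.1 : ℕ) < d then Complex.normSq (zz p) else 0 : ℝ) : ℂ) := by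
          rw [inprod]
          push_cast
          refine Finset.sum_congr rfl fun p _ => ?_
          rw [hmask zz p]
          by_cases hc2 : (p.1 : ℕ) < d
          · rw [if_pos hc2, if_pos hc2, ← Complex.normSq_eq_conj_mul_self]
          · rw [if_neg hc2, if_neg hc2, map_zero, zero_mul]
            simp
        have h3 : ((∑ p, Complex.normSq (((lift U (J := Fin r)).mulVec zz) p) : ℝ) : ℂ)
            = ((∑ p, if (p.1 : ℕ) < d then Complex.normSq (zz p) else 0 : ℝ) : ℂ) := by
          rw [← inprod_self, h1, h2]
        have h4 := Complex.ofReal_injective h3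
        rw [h4]
        calc (∑ p, if (p.1 : ℕ) < d then Complex.normSq (zz p) else 0)
            ≤ ∑ p, Complex.normSq (zz p) := by
              refine Finset.sum_le_sum fun p _ => ?_
              by_cases hc2 : (p.1 : ℕ) < d
              · rw [if_pos hc2]
              · rw [if_neg hc2]; exact Complex.normSq_nonneg _
          _ = 1 := unitVec_normSq_sum hz
    have hXv : inprod aa ((lift Uᴴ (J := Fin r) * X * lift U (J := Fin r)).mulVec cc)
        = inprod ((lift U).mulVec aa) (X.mulVec ((lift U).mulVec cc)) := by
      rw [← Matrix.mulVec_mulVec, ← Matrix.mulVec_mulVec, hadjr]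
    rw [hXv]
    set a₁ := (lift U (J := Fin r)).mulVec aa with ha₁
    set c₁ := (lift U (J := Fin r)).mulVec cc with hc₁
    obtain ⟨hRa0, hRa1⟩ := hbound aa ha
    obtain ⟨hRc0, hRc1⟩ := hbound cc hc
    by_cases hRa : ∑ p, Complex.normSq (a₁ p) = 0
    · have ha0 : a₁ = 0 := by
        funext p
        exact Complex.normSq_eq_zero.mp
          ((Finset.sum_eq_zero_iff_of_nonneg (fun p _ => Complex.normSq_nonneg _)).mp hRa p
            (Finset.mem_univ p))
      rw [ha0]
      simp [inprod]
    by_cases hRc : ∑ p, Complex.normSq (c₁ p) = 0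
    · have hc0 : c₁ = 0 := by
        funext p
        exact Complex.normSq_eq_zero.mp
          ((Finset.sum_eq_zero_iff_of_nonneg (fun p _ => Complex.normSq_nonneg _)).mp hRc p
            (Finset.mem_univ p))
      rw [hc0]
      simp [inprod, Matrix.mulVec, dotProduct]
    · set Ra := ∑ p, Complex.normSq (a₁ p) with hRadef
      set Rc := ∑ p, Complex.normSq (c₁ p) with hRcdef
      set α := Real.sqrt Ra with hα
      set γ := Real.sqrt Rc with hγ
      have hα0 : 0 < α := Real.sqrt_pos.mpr (lt_of_le_of_ne hRa0 (Ne.symm hRa))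
      have hγ0 : 0 < γ := Real.sqrt_pos.mpr (lt_of_le_of_ne hRc0 (Ne.symm hRc))
      have hα2 : (α : ℝ) ^ 2 = Ra := Real.sq_sqrt hRa0
      have hγ2 : (γ : ℝ) ^ 2 = Rc := Real.sq_sqrt hRc0
      set ah := ((α : ℂ))⁻¹ • a₁ with hahdef
      set ch := ((γ : ℂ))⁻¹ • c₁ with hchdef
      have hah : UnitVec ah := by
        show inprod ah ah = 1
        rw [hahdef, inprod_smul_left, inprod_smul_right, inprod_self, ← hRadef,
          map_inv₀, Complex.conj_ofReal]
        rw [show ((α : ℂ))⁻¹ * (((α : ℂ))⁻¹ * (Ra : ℂ)) = (Ra : ℂ) / ((α : ℂ) * (α : ℂ)) by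
          field_simp]
        rw [show ((α : ℂ) * (α : ℂ)) = ((Ra : ℝ) : ℂ) by
          push_cast [← hα2]; ring]
        rw [div_self (by exact_mod_cast hRa)]
      have hch : UnitVec ch := by
        show inprod ch ch = 1
        rw [hchdef, inprod_smul_left, inprod_smul_right, inprod_self, ← hRcdef,
          map_inv₀, Complex.conj_ofReal]
        rw [show ((γ : ℂ))⁻¹ * (((γ : ℂ))⁻¹ * (Rc : ℂ)) = (Rc : ℂ) / ((γ : ℂ) * (γ : ℂ)) by
          field_simp]
        rw [show ((γ : ℂ) * (γ : ℂ)) = ((Rc : ℝ) : ℂ) by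
          push_cast [← hγ2]; ring]
        rw [div_self (by exact_mod_cast hRc)]
      have ha₁' : a₁ = (α : ℂ) • ah := by
        rw [hahdef, smul_smul, mul_inv_cancel₀ (by exact_mod_cast hα0.ne'), one_smul]
      have hc₁' : c₁ = (γ : ℂ) • ch := by
        rw [hchdef, smul_smul, mul_inv_cancel₀ (by exact_mod_cast hγ0.ne'), one_smul]
      have habs : ‖inprod a₁ (X.mulVec c₁)‖
          = α * γ * ‖inprod ah (X.mulVec ch)‖ := by
        conv_lhs => rw [ha₁', hc₁']
        rw [Matrix.mulVec_smul, inprod_smul_left, inprod_smul_right, norm_mul,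
          norm_mul,
          Complex.norm_conj, Complex.norm_real, Complex.norm_real, Real.norm_eq_abs, Real.norm_eq_abs,
          abs_of_pos hα0, abs_of_pos hγ0]
        ring
      rw [habs]
      have h1 : ‖inprod ah (X.mulVec ch)‖ ≤ 1 :=
        le_trans (abs_inprod_le_opNorm X hah hch) hXn
      have hα1 : α ≤ 1 := Real.sqrt_le_one.mpr hRa1
      have hγ1 : γ ≤ 1 := Real.sqrt_le_one.mpr hRc1
      calc α * γ * ‖inprod ah (X.mulVec ch)‖ ≤ 1 * 1 * 1 := by
            gcongr
        _ = 1 := by ring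
  · -- v' is a unit vector
    show inprod ((lift Uᴴ).mulVec v) ((lift Uᴴ).mulVec v) = 1
    rw [hadjn, hproj]
    exact hv
  · -- the value is preserved
    rw [tensorId_comp]
    rw [← Matrix.mulVec_mulVec, ← Matrix.mulVec_mulVec, hproj, hadjn, hproj]

end Auxiliary

/-- Equation (10): stabilization of the completely bounded order norm on the `k`-super
minimal operator system. -/
theorem cb_kSuperMinimal_order_norm_stabilizes (r n k : ℕ) (hr : 0 < r) (hk : 1 ≤ k)
    (hkn : k ≤ n)
    (Φ : Matrix (Fin r) (Fin r) ℂ →ₗ[ℂ] Matrix (Fin n) (Fin n) ℂ) :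
    sSup { t : ℝ | ∃ X : Matrix (Fin k × Fin r) (Fin k × Fin r) ℂ,
        X.IsHermitian ∧ opNorm X ≤ 1 ∧ ∃ v : Fin k × Fin n → ℂ, UnitVec v ∧
        t = ‖inprod v ((tensorId Φ X).mulVec v)‖ } =
      sSup { t : ℝ | ∃ (m : ℕ), 0 < m ∧ ∃ X : Matrix (Fin m × Fin r) (Fin m × Fin r) ℂ,
        X.IsHermitian ∧ opNorm X ≤ 1 ∧ ∃ v : Fin m × Fin n → ℂ, UnitVec v ∧
        SchmidtRank v ≤ k ∧
        t = ‖inprod v ((tensorId Φ X).mulVec v)‖ } := by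
  have hsets : { t : ℝ | ∃ X : Matrix (Fin k × Fin r) (Fin k × Fin r) ℂ,
        X.IsHermitian ∧ opNorm X ≤ 1 ∧ ∃ v : Fin k × Fin n → ℂ, UnitVec v ∧
        t = ‖inprod v ((tensorId Φ X).mulVec v)‖ } =
      { t : ℝ | ∃ (m : ℕ), 0 < m ∧ ∃ X : Matrix (Fin m × Fin r) (Fin m × Fin r) ℂ,
        X.IsHermitian ∧ opNorm X ≤ 1 ∧ ∃ v : Fin m × Fin n → ℂ, UnitVec v ∧
        SchmidtRank v ≤ k ∧
        t = ‖inprod v ((tensorId Φ X).mulVec v)‖ } := by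
    ext t
    constructor
    · rintro ⟨X, hX, hXn, v, hv, ht⟩
      refine ⟨k, hk, X, hX, hXn, v, hv, ?_, ht⟩
      calc SchmidtRank v ≤ Fintype.card (Fin k) := Matrix.rank_le_card_height _
        _ = k := Fintype.card_fin k
    · rintro ⟨m, _, X, hX, hXn, v, hv, hSR, ht⟩
      obtain ⟨X', h1, h2, v', h3, h4⟩ := compress Φ X hX hXn v hv hSR
      exact ⟨X', h1, h2, v', h3, by rw [ht, h4]⟩
  rw [hsets]
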